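/- For the spin-1 Fourier-basis state v = (1/√3)(1,1,1) (i.e., (|1,1⟩+|1,0⟩+|1,−1⟩)/√3), the maximum of its Husimi function over the sphere equals (3 + 2√2)/6. -/

import Mathlib

open Real Complex

/-- Husimi function of the spin-1 state (|1,1⟩+|1,0⟩+|1,−1⟩)/√3 at the
coherent state labelled by (θ, φ). -/
noncomputable def husimiFourier (θ φ : ℝ) : ℝ :=
  (1 / 3) * ‖
    ((Real.cos (θ / 2) : ℂ) ^ 2 +
      (Real.sqrt 2 : ℂ) * Real.cos (θ / 2) * Real.sin (θ / 2) * Complex.exp (-Complex.I * φ) +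
      (Real.sin (θ / 2) : ℂ) ^ 2 * Complex.exp (-2 * Complex.I * φ))‖ ^ 2

lemma abs_exp_I_mul (r : ℝ) : ‖Complex.exp (-Complex.I * r)‖ = 1 := by
  rw [Complex.norm_exp]
  simp

lemma abs_exp_I_mul2 (r : ℝ) : ‖Complex.exp (-2 * Complex.I * r)‖ = 1 := by
  rw [Complex.norm_exp]
  simp

/-- The maximum of the Husimi function of the spin-1 Fourier-basis state
(1/√3)(1,1,1) over the sphere equals (3 + 2√2)/6, attained at θ = π/2, φ = 0. -/
theorem husimi_max_fourier_state :
    IsGreatest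
      {x : ℝ | ∃ θ ∈ Set.Icc (0 : ℝ) π, ∃ φ ∈ Set.Icc (0 : ℝ) (2 * π),
        x = husimiFourier θ φ}
      ((3 + 2 * Real.sqrt 2) / 6) := by
  have h2 : Real.sqrt 2 ^ 2 = 2 := Real.sq_sqrt (by norm_num)
  have h2n : (0:ℝ) ≤ Real.sqrt 2 := Real.sqrt_nonneg 2
  constructor
  · refine ⟨π / 2, ⟨by positivity, by linarith [Real.pi_pos]⟩, 0,
      ⟨le_refl 0, by positivity⟩, ?_⟩
    have hc : Real.cos (π / 2 / 2) = Real.sqrt 2 / 2 := by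
      rw [show π / 2 / 2 = π / 4 by ring, Real.cos_pi_div_four]
    have hs : Real.sin (π / 2 / 2) = Real.sqrt 2 / 2 := by
      rw [show π / 2 / 2 = π / 4 by ring, Real.sin_pi_div_four]
    rw [husimiFourier, hc, hs]
    simp only [Complex.ofReal_zero, mul_zero, Complex.exp_zero, mul_one]
    have : ((Real.sqrt 2 / 2 : ℝ) : ℂ) ^ 2 +
        (Real.sqrt 2 : ℂ) * ((Real.sqrt 2 / 2 : ℝ) : ℂ) * ((Real.sqrt 2 / 2 : ℝ) : ℂ) +
        ((Real.sqrt 2 / 2 : ℝ) : ℂ) ^ 2 = ((1 + Real.sqrt 2 / 2 : ℝ) : ℂ) := by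
      have h2c : (Real.sqrt 2 : ℂ) ^ 2 = 2 := by norm_cast
      push_cast
      linear_combination (1/2 + (Real.sqrt 2 : ℂ)/4) * h2c
    rw [this, Complex.norm_real, Real.norm_of_nonneg (by positivity : (0:ℝ) ≤ 1 + Real.sqrt 2 / 2)]
    nlinarith
  · rintro x ⟨θ, ⟨hθ0, hθπ⟩, φ, _, rfl⟩
    set c := Real.cos (θ / 2)
    set s := Real.sin (θ / 2)
    have hc0 : 0 ≤ c := Real.cos_nonneg_of_mem_Icc ⟨by linarith, by linarith⟩
    have hs0 : 0 ≤ s := Real.sin_nonneg_of_nonneg_of_le_pi (by linarith) (by linarith)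
    have hcs : c ^ 2 + s ^ 2 = 1 := by
      have := Real.sin_sq_add_cos_sq (θ / 2); linarith
    have hcs2 : c * s ≤ 1 / 2 := by nlinarith [sq_nonneg (c - s)]
    have habs : ‖
        ((c : ℂ) ^ 2 + (Real.sqrt 2 : ℂ) * c * s * Complex.exp (-Complex.I * φ) +
          (s : ℂ) ^ 2 * Complex.exp (-2 * Complex.I * φ))‖ ≤ 1 + Real.sqrt 2 / 2 := by
      calc ‖_‖ ≤ ‖(c : ℂ) ^ 2 +
              (Real.sqrt 2 : ℂ) * c * s * Complex.exp (-Complex.I * φ)‖ +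
            ‖(s : ℂ) ^ 2 * Complex.exp (-2 * Complex.I * φ)‖ :=
          norm_add_le _ _
        _ ≤ ‖(c : ℂ) ^ 2‖ +
            ‖(Real.sqrt 2 : ℂ) * c * s * Complex.exp (-Complex.I * φ)‖ +
            ‖(s : ℂ) ^ 2 * Complex.exp (-2 * Complex.I * φ)‖ := by
          linarith [norm_add_le ((c : ℂ) ^ 2)
            ((Real.sqrt 2 : ℂ) * c * s * Complex.exp (-Complex.I * φ))]
        _ = c ^ 2 + Real.sqrt 2 * c * s + s ^ 2 := by
          rw [norm_mul, norm_mul, norm_mul, norm_mul, norm_pow, norm_pow,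
            abs_exp_I_mul, abs_exp_I_mul2, Complex.norm_real, Complex.norm_real,
            Complex.norm_real, Real.norm_of_nonneg hc0, Real.norm_of_nonneg hs0,
            Real.norm_of_nonneg h2n]
          ring
        _ ≤ 1 + Real.sqrt 2 / 2 := by nlinarith
    rw [husimiFourier]
    have hnn : (0:ℝ) ≤ ‖(c : ℂ) ^ 2 +
        (Real.sqrt 2 : ℂ) * c * s * Complex.exp (-Complex.I * φ) +
        (s : ℂ) ^ 2 * Complex.exp (-2 * Complex.I * φ)‖ := norm_nonneg _
    nlinarith [habs, hnn]
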